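/- Let X be a non-periodic sequence that is the image under a letter-to-letter morphism of the fixed point of a primitive substitution. Then there exist positive constants H₁, H₂, H₃ such that for every non-empty prefix u of X: every return word v on u satisfies H₁|u| ≤ |v| ≤ H₂|u|, and the number of return words on u is at most H₃. -/

import Mathlib

namespace Cobham

open Filter

variable {A : Type*} {B : Type*}

/-- The factor `X_i X_{i+1} ... X_{i+n-1}` of the sequence `X`. -/
def word (X : ℕ → A) (i n : ℕ) : List A := (List.range n).map fun k => X (i + k)

/-- `u` occurs in `X` at position `i`. -/
def OccursAt (X : ℕ → A) (u : List A) (i : ℕ) : Prop := word X i u.length = u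

def IsFactor (X : ℕ → A) (u : List A) : Prop := ∃ i, OccursAt X u i

def IsPrefix (X : ℕ → A) (u : List A) : Prop := OccursAt X u 0

/-- Uniformly recurrent: gaps between successive occurrences of any factor are bounded. -/
def UnifRec (X : ℕ → A) : Prop :=
  ∀ u, IsFactor X u → ∃ g : ℕ, ∀ i : ℕ, ∃ j, i ≤ j ∧ j ≤ i + g ∧ OccursAt X u j

/-- Return words on `u`: factors between two successive occurrences of `u` in `X`. -/
def ReturnWords (X : ℕ → A) (u : List A) : Set (List A) :=
  { v | ∃ i j, OccursAt X u i ∧ OccursAt X u j ∧ i < j ∧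
      (∀ k, i < k → k < j → ¬ OccursAt X u k) ∧ v = word X i (j - i) }

/-- Application of a morphism to a word, by concatenation. -/
def wordApply (σ : A → List B) (w : List A) : List B := w.flatMap σ

/-- Iterate of a morphism. -/
def mPow (σ : A → List A) : ℕ → A → List A
  | 0 => fun a => [a]
  | k + 1 => fun a => wordApply σ (mPow σ k a)

def Nonerasing (σ : A → List A) : Prop := ∀ a, σ a ≠ []

/-- Primitivity: some power of the morphism maps every letter to a word
containing every letter. -/
def Primitive (σ : A → List A) : Prop := ∃ k, 0 < k ∧ ∀ a b : A, b ∈ mPow σ k a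

/-- Primitivity restricted to a set of letters. -/
def PrimitiveOn (σ : A → List A) (S : Set A) : Prop :=
  ∃ k, 0 < k ∧ ∀ a ∈ S, ∀ b ∈ S, b ∈ mPow σ k a

/-- `X` is a fixed point of `σ`: the image of every prefix of `X` is a prefix of `X`. -/
def IsFixedPt (σ : A → List A) (X : ℕ → A) : Prop :=
  ∀ n, OccursAt X (wordApply σ (word X 0 n)) 0

def UltPeriodic (X : ℕ → A) : Prop :=
  ∃ N p : ℕ, 0 < p ∧ ∀ n, N ≤ n → X (n + p) = X n

def Periodic (X : ℕ → A) : Prop := ∃ p : ℕ, 0 < p ∧ ∀ n, X (n + p) = X n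

/-- `u` occurs at position `i` inside the word `w`. -/
def WOcc (u w : List A) (i : ℕ) : Prop :=
  i + u.length ≤ w.length ∧ (w.drop i).take u.length = u

/-- `D` is the derived sequence of `X` on `u`: a sequence of return words on `u`
whose concatenation is `X`. -/
def IsDerived (X : ℕ → A) (u : List A) (D : ℕ → List A) : Prop :=
  (∀ n, D n ∈ ReturnWords X u) ∧ ∀ n, OccursAt X ((word D 0 n).flatten) 0

/-- `τu` is the return substitution of `τ` on `u` (on the alphabet of return words):
`Θ_u ∘ τ_u = τ ∘ Θ_u`. -/
def RetSub (τ : A → List A) (X : ℕ → A) (u : List A)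
    (τu : List A → List (List A)) : Prop :=
  ∀ r ∈ ReturnWords X u,
    (∀ s ∈ τu r, s ∈ ReturnWords X u) ∧ (τu r).flatten = wordApply τ r

/-- Eigenvalue of a complex matrix. -/
def IsEig {n : Type*} [Fintype n] (M : Matrix n n ℂ) (μ : ℂ) : Prop :=
  ∃ v : n → ℂ, v ≠ 0 ∧ M.mulVec v = μ • v

/-- Incidence matrix of a morphism, as a complex matrix. -/
def incMat [Fintype A] [DecidableEq A] (σ : A → List A) : Matrix A A ℂ :=
  Matrix.of fun i j => (((σ j).count i : ℕ) : ℂ)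

/-- Incidence matrix of a return substitution, indexed by the set of return words. -/
def retMat [DecidableEq A] (τu : List A → List (List A)) (S : Set (List A))
    [Fintype S] : Matrix S S ℂ :=
  Matrix.of fun i j => (((τu (j : List A)).count (i : List A) : ℕ) : ℂ)

/-- `α` is the dominant eigenvalue of the incidence matrix of `σ`. -/
def IsDomEig [Fintype A] [DecidableEq A] (σ : A → List A) (α : ℝ) : Prop :=
  IsEig (incMat σ) (α : ℂ) ∧ ∀ μ : ℂ, IsEig (incMat σ) μ → ‖μ‖ ≤ α

/-- `X` is `α`-substitutive: the image under a letter-to-letter morphism of the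
fixed point of a primitive substitution with dominant eigenvalue `α`. -/
def IsSubstitutiveWith {A : Type*} (α : ℝ) (X : ℕ → A) : Prop :=
  ∃ (C : Type) (hF : Fintype C) (hD : DecidableEq C) (σ : C → List C) (c : C)
    (Y : ℕ → C) (ψ : C → A),
    Nonerasing σ ∧ (σ c).head? = some c ∧ Primitive σ ∧
    Y 0 = c ∧ IsFixedPt σ Y ∧ (∀ n, X n = ψ (Y n)) ∧ @IsDomEig C hF hD σ α

/-- Perron number: a real algebraic integer `α ≥ 1` strictly dominating the
absolute values of its other conjugates. -/
def IsPerron (α : ℝ) : Prop :=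
  1 ≤ α ∧ IsIntegral ℤ α ∧
    ∀ β : ℂ, Polynomial.aeval β (minpoly ℤ α) = 0 → β ≠ (α : ℂ) → ‖β‖ < α

section WordLemmas

variable {X : ℕ → A}

@[simp] lemma word_length (X : ℕ → A) (i n : ℕ) : (word X i n).length = n := by
  simp [word]

lemma word_append (X : ℕ → A) (i s t : ℕ) :
    word X i (s + t) = word X i s ++ word X (i + s) t := by
  simp only [word, List.range_add, List.map_append, List.map_map]
  congr 1
  apply List.map_congr_left
  intro k _
  simp only [Function.comp]
  congr 1
  omega

@[simp] lemma word_zero (X : ℕ → A) (i : ℕ) : word X i 0 = [] := by simp [word]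

lemma word_one (X : ℕ → A) (i : ℕ) : word X i 1 = [X i] := by simp [word, List.range_succ]

lemma occursAt_word (X : ℕ → A) (i n : ℕ) : OccursAt X (word X i n) i := by
  simp [OccursAt]

lemma OccursAt.eq_word {u : List A} {i : ℕ} (h : OccursAt X u i) :
    u = word X i u.length := h.symm

lemma word_eq_window {q i n s t : ℕ} (h : word X q n = word X i n) (hst : s + t ≤ n) :
    word X (q + s) t = word X (i + s) t := by
  have hn : n = s + (t + (n - s - t)) := by omega
  rw [hn, word_append, word_append, word_append, word_append] at h
  have h1 := List.append_inj h (by simp)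
  have h2 := List.append_inj h1.2 (by simp)
  exact h2.1

lemma infix_word_word {q ℓ s L : ℕ} (hsq : s ≤ q) (hqL : q + ℓ ≤ s + L) :
    word X q ℓ <:+: word X s L := by
  have hL : L = (q - s) + (ℓ + (s + L - q - ℓ)) := by omega
  rw [hL, word_append, word_append]
  have hq : s + (q - s) = q := by omega
  rw [hq]
  exact ⟨word X s (q - s), word X (q + ℓ) (s + L - q - ℓ), by simp⟩

lemma occursAt_of_infix {u : List A} {s L : ℕ} (h : u <:+: word X s L) :
    ∃ j, s ≤ j ∧ j + u.length ≤ s + L ∧ OccursAt X u j := by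
  obtain ⟨t₁, t₂, ht⟩ := h
  have hlen : t₁.length + (u.length + t₂.length) = L := by
    have := congrArg List.length ht
    simp at this; omega
  refine ⟨s + t₁.length, Nat.le_add_right s _, by omega, ?_⟩
  rw [← hlen, word_append, word_append, List.append_assoc] at ht
  have h1 := List.append_inj ht (by simp)
  have h2 := List.append_inj h1.2 (by simp)
  exact h2.1.symm

end WordLemmas
section MorphLemmas

variable {C : Type*}

lemma wordApply_append (f : A → List B) (u v : List A) :
    wordApply f (u ++ v) = wordApply f u ++ wordApply f v := by
  simp [wordApply]

@[simp] lemma wordApply_nil (f : A → List B) : wordApply f [] = [] := rfl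

@[simp] lemma wordApply_singleton (f : A → List B) (a : A) : wordApply f [a] = f a := by
  simp [wordApply]

lemma wordApply_wordApply {D : Type*} (g : B → List D) (f : A → List B) (w : List A) :
    wordApply g (wordApply f w) = wordApply (fun a => wordApply g (f a)) w := by
  simp [wordApply, List.flatMap_assoc]

@[simp] lemma mPow_zero (σ : C → List C) (a : C) : mPow σ 0 a = [a] := rfl

lemma mPow_succ (σ : C → List C) (k : ℕ) (a : C) :
    mPow σ (k + 1) a = wordApply σ (mPow σ k a) := rfl

lemma mPow_add (σ : C → List C) (m n : ℕ) (a : C) :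
    mPow σ (m + n) a = wordApply (mPow σ m) (mPow σ n a) := by
  induction m with
  | zero =>
      show _ = wordApply (fun a => [a]) _
      simp only [wordApply]
      simpa using (List.flatMap_singleton' (mPow σ n a)).symm
  | succ m ih =>
      have : m + 1 + n = (m + n) + 1 := by omega
      rw [this, mPow_succ, ih, wordApply_wordApply]
      rfl

lemma length_wordApply_ge {f : A → List B} {w : List A} {x : A} (hx : x ∈ w) :
    (f x).length ≤ (wordApply f w).length := by
  simp only [wordApply, List.length_flatMap]
  exact List.single_le_sum (fun y _ => Nat.zero_le y) _ (List.mem_map_of_mem hx)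

lemma nonerasing_mPow {σ : C → List C} (h : Nonerasing σ) (m : ℕ) (a : C) :
    mPow σ m a ≠ [] := by
  induction m with
  | zero => simp
  | succ m ih =>
      rw [mPow_succ]
      intro hc
      rcases List.exists_mem_of_ne_nil _ ih with ⟨x, hx⟩
      have : (σ x).length ≤ (wordApply σ (mPow σ m a)).length := length_wordApply_ge hx
      rw [hc] at this
      simp at this
      exact h x this

lemma one_le_length_mPow {σ : C → List C} (h : Nonerasing σ) (m : ℕ) (a : C) :
    1 ≤ (mPow σ m a).length :=
  Nat.one_le_iff_ne_zero.mpr fun hc => nonerasing_mPow h m a (List.length_eq_zero_iff.mp hc)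

lemma infix_wordApply (f : A → List B) {u v : List A} (h : u <:+: v) :
    wordApply f u <:+: wordApply f v := by
  obtain ⟨s, t, rfl⟩ := h
  rw [wordApply_append, wordApply_append]
  exact ⟨wordApply f s, wordApply f t, rfl⟩

lemma infix_of_mem {l : List A} {x : A} (hx : x ∈ l) : [x] <:+: l := by
  obtain ⟨s, t, rfl⟩ := List.append_of_mem hx
  exact ⟨s, t, by simp⟩

lemma mPow_infix_of_mem {σ : C → List C} {x a : C} {k : ℕ} (hx : x ∈ mPow σ k a) (m : ℕ) :
    mPow σ m x <:+: mPow σ (m + k) a := by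
  rw [mPow_add]
  have := infix_wordApply (mPow σ m) (infix_of_mem hx)
  simpa using this

lemma length_wordApply_le {f : A → List B} {w : List A} {M : ℕ}
    (h : ∀ x ∈ w, (f x).length ≤ M) : (wordApply f w).length ≤ w.length * M := by
  simp only [wordApply, List.length_flatMap]
  calc (w.map fun x => (f x).length).sum ≤ (w.map fun _ => M).sum := by
        apply List.sum_le_sum
        intro i hi
        exact h i hi
      _ = w.length * M := by simp [List.map_const', List.sum_replicate, smul_eq_mul]

end MorphLemmas
section Blocks

variable {C : Type*} {τ : C → List C} {Y : ℕ → C}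

lemma prefix_image (hfix : IsFixedPt τ Y) {w : List C} (hw : OccursAt Y w 0) :
    OccursAt Y (wordApply τ w) 0 := by
  have := hfix w.length
  rwa [hw] at this

lemma fix_pow (hfix : IsFixedPt τ Y) (m n : ℕ) :
    OccursAt Y (wordApply (mPow τ m) (word Y 0 n)) 0 := by
  induction m with
  | zero =>
      have : wordApply (mPow τ 0) (word Y 0 n) = word Y 0 n := by
        show (word Y 0 n).flatMap (fun a => [a]) = _
        exact List.flatMap_singleton' _
      rw [this]
      exact occursAt_word Y 0 n
  | succ m ih =>
      have : wordApply (mPow τ (m + 1)) (word Y 0 n)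
          = wordApply τ (wordApply (mPow τ m) (word Y 0 n)) := by
        rw [wordApply_wordApply]
        rfl
      rw [this]
      exact prefix_image hfix ih

/-- Position of the `n`-th level-`m` block. -/
def Pf (τ : C → List C) (Y : ℕ → C) (m n : ℕ) : ℕ :=
  (wordApply (mPow τ m) (word Y 0 n)).length

@[simp] lemma Pf_zero (m : ℕ) : Pf τ Y m 0 = 0 := by simp [Pf]

lemma Pf_succ (m n : ℕ) : Pf τ Y m (n + 1) = Pf τ Y m n + (mPow τ m (Y n)).length := by
  unfold Pf
  rw [word_append, word_one, wordApply_append]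
  simp

lemma prefix_eq (hfix : IsFixedPt τ Y) (m n : ℕ) :
    wordApply (mPow τ m) (word Y 0 n) = word Y 0 (Pf τ Y m n) :=
  (fix_pow hfix m n).eq_word

lemma block_occursAt (hfix : IsFixedPt τ Y) (m n : ℕ) :
    OccursAt Y (mPow τ m (Y n)) (Pf τ Y m n) := by
  have h1 := prefix_eq hfix m (n + 1)
  rw [word_append, word_one, wordApply_append, wordApply_singleton, prefix_eq hfix m n] at h1
  have h2 : word Y 0 (Pf τ Y m (n + 1)) = word Y 0 (Pf τ Y m n)
      ++ word Y (0 + Pf τ Y m n) ((mPow τ m (Y n)).length) := by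
    rw [← word_append]
    congr 1
    rw [Pf_succ]
  rw [h2] at h1
  have := (List.append_inj h1 (by simp)).2
  simpa [OccursAt] using this.symm

lemma Pf_strict (hne : Nonerasing τ) (m n : ℕ) : Pf τ Y m n + 1 ≤ Pf τ Y m (n + 1) := by
  rw [Pf_succ]
  have := one_le_length_mPow hne m (Y n)
  omega

lemma le_Pf (hne : Nonerasing τ) (m n : ℕ) : n ≤ Pf τ Y m n := by
  induction n with
  | zero => simp
  | succ n ih => have := Pf_strict (Y := Y) hne m n; omega

lemma exists_block (hne : Nonerasing τ) (m q : ℕ) :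
    ∃ n, Pf τ Y m n ≤ q ∧ q < Pf τ Y m (n + 1) := by
  have hex : ∃ n, q < Pf τ Y m n := ⟨q + 1, lt_of_lt_of_le (Nat.lt_succ_self q) (le_Pf hne m (q + 1))⟩
  classical
  let n₀ := Nat.find hex
  have hn₀ : q < Pf τ Y m n₀ := Nat.find_spec hex
  have h1 : n₀ ≠ 0 := by
    intro h
    rw [h] at hn₀
    simp at hn₀
  refine ⟨n₀ - 1, ?_, ?_⟩
  · have := Nat.find_min hex (m := n₀ - 1) (by omega)
    omega
  · have : n₀ - 1 + 1 = n₀ := by omega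
    rw [this]
    exact hn₀

end Blocks
section Lengths

variable {C : Type*} [Fintype C] [Nonempty C] {σ : C → List C}

/-- Maximal length of the image of a letter under the `m`-th power. -/
noncomputable def maxlen (σ : C → List C) (m : ℕ) : ℕ :=
  Finset.univ.sup fun c => (mPow σ m c).length

/-- Minimal length of the image of a letter under the `m`-th power. -/
noncomputable def minlen [Fintype C] [Nonempty C] (σ : C → List C) (m : ℕ) : ℕ :=
  Finset.univ.inf' Finset.univ_nonempty fun c => (mPow σ m c).length

lemma length_le_maxlen (m : ℕ) (c : C) : (mPow σ m c).length ≤ maxlen σ m := by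
  unfold maxlen
  exact Finset.le_sup (f := fun c => (mPow σ m c).length) (Finset.mem_univ c)

lemma minlen_le_length (m : ℕ) (c : C) : minlen σ m ≤ (mPow σ m c).length :=
  Finset.inf'_le _ (Finset.mem_univ c)

lemma le_minlen {m n : ℕ} (h : ∀ c : C, n ≤ (mPow σ m c).length) : n ≤ minlen σ m :=
  Finset.le_inf' _ _ fun c _ => h c

lemma maxlen_le {m n : ℕ} (h : ∀ c : C, (mPow σ m c).length ≤ n) : maxlen σ m ≤ n :=
  Finset.sup_le fun c _ => h c

lemma one_le_minlen (hne : Nonerasing σ) (m : ℕ) : 1 ≤ minlen σ m :=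
  le_minlen fun c => one_le_length_mPow hne m c

lemma one_le_maxlen (hne : Nonerasing σ) (m : ℕ) : 1 ≤ maxlen σ m := by
  have c : C := Classical.arbitrary C
  exact le_trans (one_le_length_mPow hne m c) (length_le_maxlen m c)

lemma maxlen_add (i j : ℕ) : maxlen σ (i + j) ≤ maxlen σ j * maxlen σ i := by
  apply maxlen_le
  intro c
  rw [mPow_add]
  have h := length_wordApply_le (f := mPow σ i) (w := mPow σ j c) (M := maxlen σ i)
    (fun x _ => length_le_maxlen i x)
  calc (wordApply (mPow σ i) (mPow σ j c)).length ≤ (mPow σ j c).length * maxlen σ i := h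
    _ ≤ maxlen σ j * maxlen σ i := Nat.mul_le_mul_right _ (length_le_maxlen j c)

lemma maxlen_pow (hne : Nonerasing σ) (i : ℕ) : maxlen σ i ≤ (maxlen σ 1) ^ i := by
  induction i with
  | zero =>
      apply maxlen_le
      intro c
      simp
  | succ i ih =>
      calc maxlen σ (i + 1) ≤ maxlen σ 1 * maxlen σ i := maxlen_add i 1
        _ ≤ maxlen σ 1 * (maxlen σ 1) ^ i := Nat.mul_le_mul_left _ ih
        _ = (maxlen σ 1) ^ (i + 1) := by ring

lemma maxlen_le_minlen_add {k : ℕ} (hk : ∀ a b : C, b ∈ mPow σ k a) (j : ℕ) :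
    maxlen σ j ≤ minlen σ (j + k) := by
  apply le_minlen
  intro c
  apply maxlen_le
  intro d
  rw [mPow_add]
  exact length_wordApply_ge (hk c d)

lemma two_le_length {l : List C} {b₁ b₂ : C} (hb : b₁ ≠ b₂) (h₁ : b₁ ∈ l) (h₂ : b₂ ∈ l) :
    2 ≤ l.length := by
  rcases l with _ | ⟨x, _ | ⟨y, t⟩⟩
  · simp at h₁
  · simp at h₁ h₂; exact absurd (h₁.trans h₂.symm) hb
  · simp

lemma length_wordApply_ge_mul {f : A → List B} {w : List A} {L : ℕ}
    (h : ∀ x ∈ w, L ≤ (f x).length) : w.length * L ≤ (wordApply f w).length := by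
  simp only [wordApply, List.length_flatMap]
  calc w.length * L = (w.map fun _ => L).sum := by simp [List.map_const', List.sum_replicate, smul_eq_mul]
    _ ≤ (w.map fun x => (f x).length).sum := List.sum_le_sum fun i hi => h i hi

lemma minlen_double {k : ℕ} (hk : ∀ a b : C, b ∈ mPow σ k a)
    (hC2 : ∃ b₁ b₂ : C, b₁ ≠ b₂) (j : ℕ) :
    2 * minlen σ j ≤ minlen σ (j + k) := by
  apply le_minlen
  intro c
  rw [mPow_add]
  obtain ⟨b₁, b₂, hb⟩ := hC2
  have h2 : 2 ≤ (mPow σ k c).length := two_le_length hb (hk c b₁) (hk c b₂)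
  calc 2 * minlen σ j ≤ (mPow σ k c).length * minlen σ j :=
        Nat.mul_le_mul_right _ h2
    _ ≤ (wordApply (mPow σ j) (mPow σ k c)).length :=
        length_wordApply_ge_mul fun x _ => minlen_le_length j x

lemma minlen_unbounded {k : ℕ} (hk : ∀ a b : C, b ∈ mPow σ k a)
    (hC2 : ∃ b₁ b₂ : C, b₁ ≠ b₂) (hne : Nonerasing σ) (t : ℕ) :
    2 ^ t ≤ minlen σ ((t + 1) * k) := by
  induction t with
  | zero => simpa using one_le_minlen hne k
  | succ t ih =>
      have : (t + 1 + 1) * k = (t + 1) * k + k := by ring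
      rw [this]
      calc 2 ^ (t + 1) = 2 * 2 ^ t := by ring
        _ ≤ 2 * minlen σ ((t + 1) * k) := Nat.mul_le_mul_left _ ih
        _ ≤ minlen σ ((t + 1) * k + k) := minlen_double hk hC2 _

lemma exists_level {k : ℕ} (hkpos : 0 < k) (hk : ∀ a b : C, b ∈ mPow σ k a)
    (hC2 : ∃ b₁ b₂ : C, b₁ ≠ b₂) (hne : Nonerasing σ) (ℓ : ℕ) (hℓ : 1 ≤ ℓ) :
    ∃ m, k ≤ m ∧ ℓ ≤ minlen σ m ∧ maxlen σ m ≤ (maxlen σ 1) ^ (2 * k) * ℓ := by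
  classical
  have hex : ∃ t : ℕ, ℓ ≤ minlen σ ((t + 1) * k) := by
    refine ⟨ℓ, le_trans (le_of_lt (Nat.lt_two_pow_self (n := ℓ))) (minlen_unbounded hk hC2 hne ℓ)⟩
  set T := Nat.find hex with hT
  have hspec : ℓ ≤ minlen σ ((T + 1) * k) := Nat.find_spec hex
  have hM1 : 1 ≤ maxlen σ 1 := one_le_maxlen hne 1
  refine ⟨(T + 1) * k, Nat.le_mul_of_pos_left k (by omega), hspec, ?_⟩
  rcases Nat.eq_zero_or_pos T with h0 | hTpos
  · rw [h0]
    calc maxlen σ ((0 + 1) * k) = maxlen σ k := by norm_num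
      _ ≤ (maxlen σ 1) ^ k := maxlen_pow hne k
      _ ≤ (maxlen σ 1) ^ (2 * k) := Nat.pow_le_pow_right hM1 (by omega)
      _ ≤ (maxlen σ 1) ^ (2 * k) * ℓ := Nat.le_mul_of_pos_right _ (by omega)
  · have hmin : ¬ ℓ ≤ minlen σ ((T - 1 + 1) * k) := Nat.find_min hex (by omega)
    have hTT : (T - 1 + 1) = T := by omega
    rw [hTT] at hmin
    push_neg at hmin
    have e1 : (T + 1) * k = T * k + k := by ring
    have e2 : T * k = (T - 1) * k + k := by
      calc T * k = (T - 1 + 1) * k := by rw [hTT]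
        _ = (T - 1) * k + k := by ring
    have h2 : maxlen σ (T * k) ≤ maxlen σ k * ℓ := by
      calc maxlen σ (T * k) = maxlen σ ((T - 1) * k + k) := by rw [← e2]
        _ ≤ maxlen σ k * maxlen σ ((T - 1) * k) := maxlen_add _ _
        _ ≤ maxlen σ k * minlen σ ((T - 1) * k + k) :=
            Nat.mul_le_mul_left _ (maxlen_le_minlen_add hk _)
        _ = maxlen σ k * minlen σ (T * k) := by rw [← e2]
        _ ≤ maxlen σ k * ℓ := Nat.mul_le_mul_left _ (le_of_lt hmin)
    have hMk : maxlen σ k ≤ (maxlen σ 1) ^ k := maxlen_pow hne k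
    calc maxlen σ ((T + 1) * k) = maxlen σ (T * k + k) := by rw [← e1]
      _ ≤ maxlen σ k * maxlen σ (T * k) := maxlen_add _ _
      _ ≤ maxlen σ k * (maxlen σ k * ℓ) := Nat.mul_le_mul_left _ h2
      _ = (maxlen σ k * maxlen σ k) * ℓ := by ring
      _ ≤ ((maxlen σ 1) ^ k * (maxlen σ 1) ^ k) * ℓ :=
          Nat.mul_le_mul_right _ (Nat.mul_le_mul hMk hMk)
      _ = (maxlen σ 1) ^ (2 * k) * ℓ := by ring

end Lengths
section LR

variable {C : Type*} [Fintype C] {τ : C → List C} {Y : ℕ → C}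

lemma word_two (Y : ℕ → C) (n : ℕ) : word Y n 2 = [Y n, Y (n + 1)] := by
  have : (2 : ℕ) = 1 + 1 := rfl
  rw [this, word_append, word_one, word_one]
  rfl

lemma wordApply_pair (f : C → List B) (x y : C) : wordApply f [x, y] = f x ++ f y := by
  simp [wordApply]

lemma two_factor_bounded (Y : ℕ → C) :
    ∃ N : ℕ, ∀ n, ∃ n', n' ≤ N ∧ word Y n' 2 = word Y n 2 := by
  classical
  set g : C × C → ℕ := fun p =>
    if h : ∃ n', word Y n' 2 = [p.1, p.2] then h.choose else 0 with hg
  refine ⟨Finset.univ.sup g, fun n => ?_⟩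
  have hke : ∃ n', word Y n' 2 = [Y n, Y (n + 1)] := ⟨n, word_two Y n⟩
  refine ⟨g (Y n, Y (n + 1)), Finset.le_sup (Finset.mem_univ _), ?_⟩
  have : g (Y n, Y (n + 1)) = hke.choose := by
    simp only [hg]
    rw [dif_pos hke]
  rw [this, hke.choose_spec, word_two]

theorem LR_Y (a : C) (hne : Nonerasing τ) (hprim : Primitive τ)
    (hY0 : Y 0 = a) (hfix : IsFixedPt τ Y) (hC2 : ∃ b₁ b₂ : C, b₁ ≠ b₂) :
    ∃ K : ℕ, 1 ≤ K ∧ ∀ q ℓ, 1 ≤ ℓ → ∀ i : ℕ,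
      ∃ j, i ≤ j ∧ j + ℓ ≤ i + K * ℓ ∧ OccursAt Y (word Y q ℓ) j := by
  haveI : Nonempty C := ⟨a⟩
  obtain ⟨k, hkpos, hk⟩ := hprim
  obtain ⟨N, hN⟩ := two_factor_bounded Y
  obtain ⟨js, hjsk, hjsmin, -⟩ := exists_level hkpos hk hC2 hne (N + 2) (by omega)
  set M : ℕ := (maxlen τ 1) ^ (2 * k) with hM
  have hM1 : 1 ≤ maxlen τ 1 := one_le_maxlen hne 1
  have hMpos : 1 ≤ M := Nat.one_le_pow _ _ (by omega)
  set K : ℕ := 2 * (maxlen τ (js + k) * M) with hK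
  have hKpos : 1 ≤ K := by
    have := one_le_maxlen hne (js + k)
    have : 1 ≤ maxlen τ (js + k) * M := Nat.one_le_iff_ne_zero.mpr (by positivity)
    omega
  refine ⟨K, hKpos, fun q ℓ hℓ i => ?_⟩
  -- choose level m for ℓ
  obtain ⟨m, hmk, hmmin, hmmax⟩ := exists_level hkpos hk hC2 hne ℓ hℓ
  -- the word w sits inside two consecutive level-m blocks
  obtain ⟨n, hn1, hn2⟩ := exists_block (Y := Y) hne m q
  have hB2 : word Y q ℓ <:+: wordApply (mPow τ m) (word Y n 2) := by
    have hlen2 : Pf τ Y m (n + 2) = Pf τ Y m n +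
        ((mPow τ m (Y n)).length + (mPow τ m (Y (n + 1))).length) := by
      rw [Pf_succ, Pf_succ]; ring
    have hq2 : q + ℓ ≤ Pf τ Y m (n + 2) := by
      have h1 : ℓ ≤ (mPow τ m (Y (n + 1))).length :=
        le_trans hmmin (minlen_le_length m _)
      have := Pf_succ (τ := τ) (Y := Y) m (n + 1)
      have e21 : Pf τ Y m (n + 2) = Pf τ Y m (n + 1 + 1) := rfl
      omega
    have hinf : word Y q ℓ <:+: word Y (Pf τ Y m n) (Pf τ Y m (n + 2) - Pf τ Y m n) :=
      infix_word_word hn1 (by omega)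
    have heq : word Y (Pf τ Y m n) (Pf τ Y m (n + 2) - Pf τ Y m n)
        = wordApply (mPow τ m) (word Y n 2) := by
      have e : Pf τ Y m (n + 2) - Pf τ Y m n
          = (mPow τ m (Y n)).length + (mPow τ m (Y (n + 1))).length := by omega
      rw [e, word_append, word_two, wordApply_pair]
      congr 1
      · exact block_occursAt hfix m n
      · have : Pf τ Y m n + (mPow τ m (Y n)).length = Pf τ Y m (n + 1) := (Pf_succ m n).symm
        rw [this]
        exact block_occursAt hfix m (n + 1)
    rwa [heq] at hinf
  -- the two-letter factor occurs in a bounded prefix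
  obtain ⟨n', hn'N, hn'eq⟩ := hN n
  have hpref : word Y n' 2 <:+: mPow τ js a := by
    have hlenjs : n' + 2 ≤ (mPow τ js a).length := by
      have := le_trans hjsmin (minlen_le_length js a)
      omega
    have h0 : word Y 0 ((mPow τ js a).length) = mPow τ js a := by
      have := block_occursAt hfix js 0
      rw [Pf_zero, hY0] at this
      exact this
    rw [← h0]
    exact infix_word_word (Nat.zero_le _) (by omega)
  -- hence in every letter image at level js + k
  have hall : ∀ c : C, word Y q ℓ <:+: mPow τ (m + (js + k)) c := by
    intro c
    have h1 : mPow τ js a <:+: mPow τ (js + k) c := mPow_infix_of_mem (hk c a) js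
    have h2 : word Y n 2 <:+: mPow τ (js + k) c :=
      List.IsInfix.trans (hn'eq ▸ hpref) h1
    have h3 : wordApply (mPow τ m) (word Y n 2) <:+: wordApply (mPow τ m) (mPow τ (js + k) c) :=
      infix_wordApply _ h2
    rw [← mPow_add] at h3
    exact List.IsInfix.trans hB2 h3
  set ms : ℕ := m + (js + k) with hms
  -- find the block after position i
  obtain ⟨n₁, hi1, hi2⟩ := exists_block (Y := Y) hne ms i
  have hocc := block_occursAt hfix ms (n₁ + 1)
  have hwB : word Y q ℓ <:+: word Y (Pf τ Y ms (n₁ + 1)) ((mPow τ ms (Y (n₁ + 1))).length) := by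
    rw [hocc]
    exact hall (Y (n₁ + 1))
  obtain ⟨j, hj1, hj2, hj3⟩ := occursAt_of_infix hwB
  have hmax : ∀ c, (mPow τ ms c).length ≤ maxlen τ (js + k) * M * ℓ := by
    intro c
    calc (mPow τ ms c).length ≤ maxlen τ ms := length_le_maxlen ms c
      _ ≤ maxlen τ (js + k) * maxlen τ m := maxlen_add m (js + k)
      _ ≤ maxlen τ (js + k) * (M * ℓ) := Nat.mul_le_mul_left _ hmmax
      _ = maxlen τ (js + k) * M * ℓ := by ring
  have hs1 : Pf τ Y ms (n₁ + 1) ≤ i + maxlen τ (js + k) * M * ℓ := by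
    have := Pf_succ (τ := τ) (Y := Y) ms n₁
    have := hmax (Y n₁)
    omega
  have hlenw : (word Y q ℓ).length = ℓ := word_length Y q ℓ
  refine ⟨j, by omega, ?_, hj3⟩
  rw [hlenw] at hj2
  have := hmax (Y (n₁ + 1))
  have hKeq : K * ℓ = maxlen τ (js + k) * M * ℓ + maxlen τ (js + k) * M * ℓ := by
    rw [hK]; ring
  omega

end LR
section Complexity

variable {X : ℕ → A}

/-- The set of factors of length `n`. -/
def Fset (X : ℕ → A) (n : ℕ) : Set (List A) := {w | ∃ q, w = word X q n}

lemma word_mem_Fset (X : ℕ → A) (q n : ℕ) : word X q n ∈ Fset X n := ⟨q, rfl⟩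

lemma Fset_zero (X : ℕ → A) : Fset X 0 = {([] : List A)} := by
  ext w
  simp [Fset]

lemma word_succ_last (X : ℕ → A) (q n : ℕ) :
    word X q (n + 1) = word X q n ++ [X (q + n)] := by
  rw [word_append, word_one]

lemma word_succ_head (X : ℕ → A) (q n : ℕ) :
    word X q (n + 1) = X q :: word X (q + 1) n := by
  have h : n + 1 = 1 + n := by omega
  rw [h, word_append, word_one]
  rfl

lemma take_word (X : ℕ → A) (q n : ℕ) : (word X q (n + 1)).take n = word X q n := by
  rw [word_succ_last]
  have h := List.take_left (l₁ := word X q n) (l₂ := [X (q + n)])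
  rwa [word_length] at h

lemma Fset_finite {C : Type*} [Fintype C] {Y : ℕ → C} {φ : C → A}
    (hX : ∀ n, X n = φ (Y n)) (n : ℕ) : (Fset X n).Finite := by
  have hsub : Fset X n ⊆ Set.range (fun g : Fin n → C => List.ofFn (fun i => φ (g i))) := by
    rintro w ⟨q, rfl⟩
    refine ⟨fun i => Y (q + i), ?_⟩
    apply List.ext_getElem
    · simp [word]
    · intro i h1 h2
      simp [word, hX]
  exact Set.Finite.subset (Set.finite_range _) hsub

/-- Every length-`n` factor determines the next letter. -/
def Good (X : ℕ → A) (n : ℕ) : Prop :=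
  ∀ q q', word X q n = word X q' n → X (q + n) = X (q' + n)

lemma step_of_bad {n : ℕ} (hbad : ¬ Good X n) (hfin : (Fset X (n + 1)).Finite) :
    (Fset X n).ncard + 1 ≤ (Fset X (n + 1)).ncard := by
  unfold Good at hbad
  push_neg at hbad
  obtain ⟨q, q', hw, hne⟩ := hbad
  set w₁ := word X q (n + 1) with hw₁
  set w₂ := word X q' (n + 1) with hw₂
  have hww : w₁ ≠ w₂ := by
    intro h
    rw [hw₁, hw₂, word_succ_last, word_succ_last, ← hw] at h
    exact hne (List.singleton_injective (List.append_cancel_left h))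
  have hsub : Fset X n ⊆ (fun v : List A => v.take n) '' (Fset X (n + 1) \ {w₁}) := by
    rintro v ⟨r, rfl⟩
    by_cases hr : word X r (n + 1) = w₁
    · have htake : word X r n = word X q n := by
        rw [← take_word X r n, hr, hw₁, take_word]
      refine ⟨w₂, ⟨word_mem_Fset X q' (n + 1), fun hmem => hww (Set.mem_singleton_iff.mp hmem).symm⟩, ?_⟩
      simp only [hw₂, take_word]
      rw [← hw, ← htake]
    · exact ⟨word X r (n + 1), ⟨word_mem_Fset X r (n + 1), fun hmem => hr (Set.mem_singleton_iff.mp hmem)⟩,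
        take_word X r n⟩
  have h1 : (Fset X n).ncard ≤ (Fset X (n + 1) \ {w₁}).ncard := by
    calc (Fset X n).ncard ≤ ((fun v : List A => v.take n) '' (Fset X (n + 1) \ {w₁})).ncard :=
          Set.ncard_le_ncard hsub (hfin.diff.image _)
      _ ≤ (Fset X (n + 1) \ {w₁}).ncard := Set.ncard_image_le hfin.diff
  have h2 : (Fset X (n + 1) \ {w₁}).ncard + 1 = (Fset X (n + 1)).ncard :=
    Set.ncard_diff_singleton_add_one (word_mem_Fset X q (n + 1)) hfin
  omega

lemma exists_good {p : ℕ} (hfin : ∀ m, (Fset X m).Finite)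
    (hp : (Fset X p).ncard ≤ p) : ∃ n < p, Good X n := by
  by_contra hc
  push_neg at hc
  have key : ∀ n ≤ p, n + 1 ≤ (Fset X n).ncard := by
    intro n hn
    induction n with
    | zero =>
        have : (Fset X 0).ncard = 1 := by rw [Fset_zero]; simp
        omega
    | succ n ih =>
        have h1 := ih (by omega)
        have h2 := step_of_bad (hc n (by omega)) (hfin (n + 1))
        omega
  have := key p le_rfl
  omega

lemma good_implies_ult {n : ℕ} (hgood : Good X n) {q₁ q₂ : ℕ} (hlt : q₁ < q₂)
    (heq : word X q₁ n = word X q₂ n) : UltPeriodic X := by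
  rcases Nat.eq_zero_or_pos n with h0 | hn
  · refine ⟨0, 1, by omega, fun m _ => ?_⟩
    have := hgood (m + 1) m (by rw [h0]; rfl)
    rw [h0] at this
    simpa using this
  · have hshift : ∀ t, word X (q₁ + t) n = word X (q₂ + t) n := by
      intro t
      induction t with
      | zero => simpa using heq
      | succ t ih =>
          have hnext : X (q₁ + t + n) = X (q₂ + t + n) := hgood _ _ ih
          have e1 : word X (q₁ + t) (n + 1) = word X (q₂ + t) (n + 1) := by
            rw [word_succ_last, word_succ_last, ih, hnext]
          rw [word_succ_head, word_succ_head] at e1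
          have := (List.cons.injEq _ _ _ _).mp e1
          have e2 : q₁ + t + 1 = q₁ + (t + 1) := by omega
          have e3 : q₂ + t + 1 = q₂ + (t + 1) := by omega
          rw [e2, e3] at this
          exact this.2
    have hlet : ∀ t, X (q₁ + t) = X (q₂ + t) := by
      intro t
      have := word_eq_window (hshift t) (s := 0) (t := 1) (by omega)
      simp only [Nat.add_zero] at this
      rw [word_one, word_one] at this
      exact List.singleton_injective this
    refine ⟨q₁, q₂ - q₁, by omega, fun m hm => ?_⟩
    have h1 := hlet (m - q₁)
    have h2 := hlet (m - q₁ + (q₂ - q₁))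
    have e1 : q₁ + (m - q₁) = m := by omega
    have e2 : q₁ + (m - q₁ + (q₂ - q₁)) = m + (q₂ - q₁) := by omega
    have e3 : q₂ + (m - q₁) = m + (q₂ - q₁) := by omega
    rw [e1, e3] at h1
    exact h1.symm

lemma exists_repetition (hfin : (Fset X n).Finite) :
    ∃ q₁ q₂, q₁ < q₂ ∧ word X q₁ n = word X q₂ n := by
  haveI := hfin.to_subtype
  obtain ⟨q, q', hne, heq⟩ := Finite.exists_ne_map_eq_of_infinite
    (fun q : ℕ => (⟨word X q n, word_mem_Fset X q n⟩ : Fset X n))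
  have heq' : word X q n = word X q' n := by
    simpa [Subtype.ext_iff] using heq
  rcases Nat.lt_or_ge q q' with h | h
  · exact ⟨q, q', h, heq'⟩
  · exact ⟨q', q, by omega, heq'.symm⟩

end Complexity
section BadGap

variable {X : ℕ → A}

lemma ultPeriodic_of_small_period {K : ℕ}
    (hLR : ∀ q ℓ, 1 ≤ ℓ → ∀ i : ℕ, ∃ j, i ≤ j ∧ j + ℓ ≤ i + K * ℓ ∧ word X j ℓ = word X q ℓ)
    (hfin : ∀ m, (Fset X m).Finite)
    {i₀ p ℓ : ℕ} (hp : 1 ≤ p)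
    (hper : ∀ r, r < ℓ → X (i₀ + r + p) = X (i₀ + r))
    (hKl : (K + 2) * p ≤ ℓ) : UltPeriodic X := by
  have hexp : K * p + 2 * p = (K + 2) * p := by ring
  have claimmod : ∀ t, t < ℓ + p → X (i₀ + t) = X (i₀ + t % p) := by
    intro t
    induction t using Nat.strong_induction_on with
    | _ t ih =>
        intro ht
        rcases Nat.lt_or_ge t p with h | h
        · rw [Nat.mod_eq_of_lt h]
        · have h1 : t - p < ℓ := by omega
          have h2 : X (i₀ + (t - p) + p) = X (i₀ + (t - p)) := hper _ h1
          have e : i₀ + (t - p) + p = i₀ + t := by omega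
          rw [e] at h2
          rw [h2, ih (t - p) (by omega) (by omega)]
          congr 1
          conv_rhs => rw [show t = (t - p) + p from by omega, Nat.add_mod_right]
  have hfactor : ∀ q, ∃ r, r < p ∧ word X q p = word X (i₀ + r) p := by
    intro q
    obtain ⟨j, hj1, hj2, hj3⟩ := hLR q p hp i₀
    refine ⟨(j - i₀) % p, Nat.mod_lt _ (by omega), ?_⟩
    have hrlt : (j - i₀) % p < p := Nat.mod_lt _ (by omega)
    have key : ∀ idx, idx < p → X (j + idx) = X (i₀ + (j - i₀) % p + idx) := by
      intro idx hidx
      have eassoc : i₀ + (j - i₀) % p + idx = i₀ + ((j - i₀) % p + idx) := by omega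
      rw [eassoc]
      have e1 : X (j + idx) = X (i₀ + (j - i₀ + idx)) := by congr 1; omega
      have e2 : X (i₀ + (j - i₀ + idx)) = X (i₀ + (j - i₀ + idx) % p) :=
        claimmod _ (by omega)
      have e3 : X (i₀ + ((j - i₀) % p + idx)) = X (i₀ + ((j - i₀) % p + idx) % p) :=
        claimmod _ (by omega)
      have e4 : (j - i₀ + idx) % p = ((j - i₀) % p + idx) % p := by
        rw [Nat.add_mod (j - i₀) idx p, Nat.add_mod ((j - i₀) % p) idx p,
          Nat.mod_eq_of_lt hrlt]
      rw [e1, e2, e4, ← e3]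
    rw [← hj3]
    apply List.ext_getElem (by simp)
    intro idx h1 h2
    simp only [word, List.getElem_map, List.getElem_range]
    rw [word_length] at h1
    exact key idx h1
  have hsub : Fset X p ⊆ (fun r => word X (i₀ + r) p) '' ↑(Finset.range p) := by
    rintro w ⟨q, rfl⟩
    obtain ⟨r, hr, he⟩ := hfactor q
    exact ⟨r, by simpa using hr, he.symm⟩
  have hcard : (Fset X p).ncard ≤ p := by
    calc (Fset X p).ncard
        ≤ ((fun r => word X (i₀ + r) p) '' ↑(Finset.range p)).ncard :=
          Set.ncard_le_ncard hsub ((Finset.range p).finite_toSet.image _)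
      _ ≤ (↑(Finset.range p) : Set ℕ).ncard :=
          Set.ncard_image_le (Finset.range p).finite_toSet
      _ = p := by rw [Set.ncard_coe_finset, Finset.card_range]
  obtain ⟨n, hnp2, hgood⟩ := exists_good hfin hcard
  obtain ⟨q₁, q₂, hlt, heq⟩ := exists_repetition (hfin n)
  exact good_implies_ult hgood hlt heq

end BadGap
lemma LR_X {C : Type*} [Fintype C] {τ : C → List C} {Y : ℕ → C} (a : C)
    (hne : Nonerasing τ) (hprim : Primitive τ) (hY0 : Y 0 = a) (hfix : IsFixedPt τ Y)
    {φ : C → A} {X : ℕ → A} (hX : ∀ n, X n = φ (Y n)) (hC2 : ∃ b₁ b₂ : C, b₁ ≠ b₂) :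
    ∃ K : ℕ, 1 ≤ K ∧ ∀ q ℓ, 1 ≤ ℓ → ∀ i : ℕ,
      ∃ j, i ≤ j ∧ j + ℓ ≤ i + K * ℓ ∧ word X j ℓ = word X q ℓ := by
  obtain ⟨K, hK1, hLR⟩ := LR_Y a hne hprim hY0 hfix hC2
  refine ⟨K, hK1, fun q ℓ hℓ i => ?_⟩
  obtain ⟨j, h1, h2, h3⟩ := hLR q ℓ hℓ i
  have h3' : word Y j ℓ = word Y q ℓ := by
    have h4 : word Y j (word Y q ℓ).length = word Y q ℓ := h3
    rwa [word_length] at h4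
  refine ⟨j, h1, h2, ?_⟩
  have hmap : ∀ r, word X r ℓ = (word Y r ℓ).map φ := by
    intro r; simp [word, hX]
  rw [hmap, hmap, h3']

theorem stmt7 {A C : Type*} [Fintype C] (τ : C → List C) (a : C) (Y : ℕ → C)
    (hne : Nonerasing τ) (hhead : (τ a).head? = some a) (hprim : Primitive τ)
    (hY0 : Y 0 = a) (hfix : IsFixedPt τ Y)
    (φ : C → A) (X : ℕ → A) (hX : ∀ n, X n = φ (Y n))
    (hnp : ¬ UltPeriodic X) :
    ∃ H₁ H₂ H₃ : ℝ, 0 < H₁ ∧ 0 < H₂ ∧ 0 < H₃ ∧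
      ∀ u : List A, u ≠ [] → IsPrefix X u →
        (∀ v ∈ ReturnWords X u,
          H₁ * u.length ≤ v.length ∧ (v.length : ℝ) ≤ H₂ * u.length) ∧
        ((ReturnWords X u).ncard : ℝ) ≤ H₃ := by
  classical
  have hC2 : ∃ b₁ b₂ : C, b₁ ≠ b₂ := by
    by_contra hc
    push_neg at hc
    exact hnp ⟨0, 1, Nat.one_pos, fun n _ => by rw [hX, hX, hc (Y (n + 1)) (Y n)]⟩
  obtain ⟨K, hK1, hLR⟩ := LR_X a hne hprim hY0 hfix hX hC2
  have hfin : ∀ m, (Fset X m).Finite := Fset_finite hX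
  set B : ℕ := K * (K + 2) ^ 2 with hB
  refine ⟨1 / ((K : ℝ) + 2), (K : ℝ) + 1, (B : ℝ) + 1, by positivity, by positivity,
    by positivity, ?_⟩
  intro u hu hpre
  set ℓ := u.length with hldef
  have hl1 : 1 ≤ ℓ := by
    rw [hldef]
    exact List.length_pos_iff.mpr hu
  have hpre' : word X 0 ℓ = u := hpre
  -- gap bounds for consecutive occurrences
  have hgap : ∀ i j : ℕ, OccursAt X u i → OccursAt X u j → i < j →
      (∀ k, i < k → k < j → ¬ OccursAt X u k) →
      ℓ + 1 ≤ (K + 2) * (j - i) ∧ j - i ≤ 1 + K * ℓ := by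
    intro i j hi hj hij hcons
    have hi' : word X i ℓ = u := hi
    have hj' : word X j ℓ = u := hj
    constructor
    · by_contra hcontra
      push_neg at hcontra
      apply hnp
      apply ultPeriodic_of_small_period hLR hfin (show 1 ≤ j - i by omega)
        (i₀ := i) (ℓ := ℓ) ?_ (by omega)
      intro r hr
      have hw : word X i ℓ = word X j ℓ := hi'.trans hj'.symm
      have h1 := word_eq_window hw (s := r) (t := 1) (by omega)
      rw [word_one, word_one] at h1
      have h2 : X (i + r) = X (j + r) := List.singleton_injective h1
      rw [show i + r + (j - i) = j + r from by omega]
      exact h2.symm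
    · obtain ⟨j', h1, h2, h3⟩ := hLR 0 ℓ hl1 (i + 1)
      have hj'' : OccursAt X u j' := by
        show word X j' ℓ = u
        rw [h3, hpre']
      have hjj : j ≤ j' := by
        by_contra hcl
        push_neg at hcl
        exact hcons j' (by omega) hcl hj''
      omega
  have hlow2 : ∀ v ∈ ReturnWords X u, ℓ + 1 ≤ (K + 2) * v.length ∧ v.length ≤ 1 + K * ℓ := by
    intro v hv
    obtain ⟨i, j, hi, hj, hij, hcons, rfl⟩ := hv
    rw [word_length]
    exact hgap i j hi hj hij hcons
  constructor
  · intro v hv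
    obtain ⟨hlo, hup⟩ := hlow2 v hv
    have hKpos : (0 : ℝ) < (K : ℝ) + 2 := by positivity
    constructor
    · rw [div_mul_eq_mul_div, one_mul, div_le_iff₀ hKpos]
      have : (ℓ : ℝ) ≤ ((K + 2) * v.length : ℕ) := by
        exact_mod_cast le_trans (Nat.le_succ ℓ) hlo
      push_cast at this ⊢
      linarith
    · have h2 : v.length ≤ (K + 1) * ℓ := by
        have e : (K + 1) * ℓ = K * ℓ + ℓ := by ring
        omega
      have : (v.length : ℝ) ≤ ((K + 1) * ℓ : ℕ) := by exact_mod_cast h2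
      push_cast at this ⊢
      linarith
  · -- counting return words
    set G : ℕ := K * ((K + 2) * ℓ) with hG
    have hex : ∀ v ∈ ReturnWords X u, ∃ q, q ≤ G ∧
        (word X q ℓ = u ∧ word X (q + v.length) ℓ = u ∧
         (∀ s, 0 < s → s < v.length → word X (q + s) ℓ ≠ u) ∧ word X q v.length = v) := by
      intro v hv
      have hvup := (hlow2 v hv).2
      obtain ⟨i, j, hi, hj, hij, hcons, rfl⟩ := hv
      rw [word_length] at hvup ⊢
      have hi' : word X i ℓ = u := hi
      have hj' : word X j ℓ = u := hj
      set p := j - i with hpdef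
      have hexp : (K + 2) * ℓ = K * ℓ + 2 * ℓ := by ring
      have hpl : p + ℓ ≤ (K + 2) * ℓ := by omega
      obtain ⟨q, hq1, hq2, hq3⟩ := hLR i (p + ℓ) (by omega) 0
      have hqG : q ≤ G := by
        have h5 : K * (p + ℓ) ≤ K * ((K + 2) * ℓ) := Nat.mul_le_mul_left _ hpl
        omega
      have hW : ∀ s t, s + t ≤ p + ℓ → word X (q + s) t = word X (i + s) t :=
        fun s t h => word_eq_window hq3 h
      refine ⟨q, hqG, ?_, ?_, ?_, ?_⟩
      · have := hW 0 ℓ (by omega)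
        simpa [hi'] using this
      · have := hW p ℓ le_rfl
        rw [show i + p = j from by omega] at this
        rw [this, hj']
      · intro s hs1 hs2 hcontra
        have := hW s ℓ (by omega)
        rw [hcontra] at this
        exact hcons (i + s) (by omega) (by omega) this.symm
      · have := hW 0 p (by omega)
        simpa using this
    have hpos : ∀ v ∈ ReturnWords X u, 0 < v.length := by
      intro v hv
      have := (hlow2 v hv).1
      by_contra hc
      push_neg at hc
      interval_cases h : v.length
      · simp at this
    set g : List A → ℕ := fun v =>
      if h : ∃ q, q ≤ G ∧ (word X q ℓ = u ∧ word X (q + v.length) ℓ = u ∧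
          (∀ s, 0 < s → s < v.length → word X (q + s) ℓ ≠ u) ∧ word X q v.length = v)
      then h.choose * (K + 2) / ℓ else 0 with hgdef
    -- separation of witnesses
    have hsep : ∀ v ∈ ReturnWords X u, ∀ v' ∈ ReturnWords X u, ∀ q q' : ℕ,
        (word X q ℓ = u ∧ word X (q + v.length) ℓ = u ∧
          (∀ s, 0 < s → s < v.length → word X (q + s) ℓ ≠ u) ∧ word X q v.length = v) →
        (word X q' ℓ = u ∧ word X (q' + v'.length) ℓ = u ∧
          (∀ s, 0 < s → s < v'.length → word X (q' + s) ℓ ≠ u) ∧ word X q' v'.length = v') →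
        q < q' → ℓ + 1 ≤ (K + 2) * (q' - q) := by
      intro v hv v' hv' q q' hQ hQ' hqq
      have hvlen : q' - q ≥ v.length := by
        by_contra hcl
        push_neg at hcl
        have h6 := hQ.2.2.1 (q' - q) (by omega) hcl
        rw [show q + (q' - q) = q' from by omega] at h6
        exact h6 hQ'.1
      calc ℓ + 1 ≤ (K + 2) * v.length := (hlow2 v hv).1
        _ ≤ (K + 2) * (q' - q) := Nat.mul_le_mul_left _ hvlen
    have hg_lt : ∀ v ∈ ReturnWords X u, ∀ v' ∈ ReturnWords X u, ∀ q q' : ℕ,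
        (word X q ℓ = u ∧ word X (q + v.length) ℓ = u ∧
          (∀ s, 0 < s → s < v.length → word X (q + s) ℓ ≠ u) ∧ word X q v.length = v) →
        (word X q' ℓ = u ∧ word X (q' + v'.length) ℓ = u ∧
          (∀ s, 0 < s → s < v'.length → word X (q' + s) ℓ ≠ u) ∧ word X q' v'.length = v') →
        q < q' → q * (K + 2) / ℓ < q' * (K + 2) / ℓ := by
      intro v hv v' hv' q q' hQ hQ' hqq
      have h7 := hsep v hv v' hv' q q' hQ hQ' hqq
      have h8 : q * (K + 2) + ℓ + 1 ≤ q' * (K + 2) := by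
        have e : q' = q + (q' - q) := by omega
        have e2 : q' * (K + 2) = q * (K + 2) + (q' - q) * (K + 2) := by
          conv_lhs => rw [e]
          ring
        have e3 : (q' - q) * (K + 2) = (K + 2) * (q' - q) := by ring
        omega
      have h9 : (q * (K + 2) + ℓ) / ℓ ≤ q' * (K + 2) / ℓ :=
        Nat.div_le_div_right (by omega)
      rw [Nat.add_div_right _ (by omega : 0 < ℓ)] at h9
      omega
    have hinj : Set.InjOn g (ReturnWords X u) := by
      intro v hv v' hv' hgeq
      have h1 := hex v hv
      have h2 := hex v' hv'
      have hg1 : g v = h1.choose * (K + 2) / ℓ := by rw [hgdef]; exact dif_pos h1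
      have hg2 : g v' = h2.choose * (K + 2) / ℓ := by rw [hgdef]; exact dif_pos h2
      obtain ⟨hq1G, hQ1⟩ := h1.choose_spec
      obtain ⟨hq2G, hQ2⟩ := h2.choose_spec
      set q := h1.choose
      set q' := h2.choose
      rcases lt_trichotomy q q' with hlt | heqq | hgt
      · exfalso
        have hlt2 := hg_lt v hv v' hv' q q' hQ1 hQ2 hlt
        rw [← hg1, ← hg2] at hlt2
        omega
      · -- same witness: lengths must agree
        have hlen : v.length = v'.length := by
          rcases lt_trichotomy v.length v'.length with h | h | h
          · exfalso
            have h6 := hQ2.2.2.1 v.length (hpos v hv) (by omega)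
            rw [← heqq] at h6
            exact h6 hQ1.2.1
          · exact h
          · exfalso
            have h6 := hQ1.2.2.1 v'.length (hpos v' hv') (by omega)
            rw [heqq] at h6
            exact h6 hQ2.2.1
        rw [← hQ1.2.2.2, ← hQ2.2.2.2, ← heqq, hlen]
      · exfalso
        have hlt2 := hg_lt v' hv' v hv q' q hQ2 hQ1 hgt
        rw [← hg1, ← hg2] at hlt2
        omega
    have himg : g '' (ReturnWords X u) ⊆ Set.Iio (B + 1) := by
      rintro x ⟨v, hv, rfl⟩
      have h1 := hex v hv
      have hg1 : g v = h1.choose * (K + 2) / ℓ := by rw [hgdef]; exact dif_pos h1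
      obtain ⟨hq1G, hQ1⟩ := h1.choose_spec
      have h10 : h1.choose * (K + 2) ≤ B * ℓ := by
        calc h1.choose * (K + 2) ≤ G * (K + 2) := Nat.mul_le_mul_right _ hq1G
          _ = B * ℓ := by rw [hG, hB]; ring
      have h11 : h1.choose * (K + 2) / ℓ ≤ B * ℓ / ℓ := Nat.div_le_div_right h10
      rw [Nat.mul_div_cancel _ (by omega : 0 < ℓ)] at h11
      simp only [Set.mem_Iio]
      omega
    have hn1 : (ReturnWords X u).ncard = (g '' (ReturnWords X u)).ncard :=
      (Set.ncard_image_of_injOn hinj).symm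
    have hn2 : (g '' (ReturnWords X u)).ncard ≤ (Set.Iio (B + 1)).ncard :=
      Set.ncard_le_ncard himg (Set.finite_Iio _)
    have hn3 : (Set.Iio (B + 1) : Set ℕ).ncard = B + 1 := by
      rw [← Finset.coe_range, Set.ncard_coe_finset, Finset.card_range]
    have : (ReturnWords X u).ncard ≤ B + 1 := by omega
    exact_mod_cast this

end Cobham
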